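/- Let R be a commutative ℚ-algebra, A a commutative R-algebra, and (ζ_j, ζ'_j)_{j∈J} (J finite) a family of R-linear derivations of A, all pairwise commuting. Set 𝒟 := Σ_{j∈J} ζ_j∘ζ'_j and 𝒯 := e^{(ħ/2)𝒟} := Σ_{n≥0} (ħ/2)^n 𝒟^n / n! acting coefficientwise on A[[ħ]]; 𝒯 is bijective with inverse e^{−(ħ/2)𝒟}. Then for all F, G ∈ A[[ħ]]: 𝒯(𝒯^{-1}(F) · 𝒯^{-1}(G)) = Σ_{n≥0} (ħ^n / (2^n · n!)) Σ_{j_1,…,j_n ∈ J} Σ_{ε ∈ {0,1}^n} (ζ^{(ε_1)}_{j_1}∘⋯∘ζ^{(ε_n)}_{j_n})(F) · (ζ^{(1−ε_1)}_{j_1}∘⋯∘ζ^{(1−ε_n)}_{j_n})(G), where ζ^{(0)}_j = ζ_j and ζ^{(1)}_j = ζ'_j. In other words, the product F ·_𝒯 G := 𝒯(𝒯^{-1}F · 𝒯^{-1}G) is the exponential product determined by the symmetrized bidifferential operator D(F⊗G) = (1/2) Σ_j (ζ_j F ⊗ ζ'_j G + ζ'_j F ⊗ ζ_j G). (This is the finite-rank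 case of the paper's Proposition that the time-ordered product defined by 𝒯 is the exponential product defined by the kernel iΔ^D.) -/

import Mathlib

/-- Iterated application of a family of derivations. -/
noncomputable def compDer {R A : Type*} [CommRing R] [CommRing A] [Algebra R A]
    {I : Type*} (ξ : I → Derivation R A A) : (k : ℕ) → (Fin k → I) → A → A
  | 0, _, a => a
  | k + 1, w, a => ξ (w 0) (compDer ξ k (fun i => w i.succ) a)

/-- The second-order differential operator `𝒟 = Σ_j ζ_j ∘ ζ'_j`. -/
noncomputable def Dop {R A : Type*} [CommRing R] [CommRing A] [Algebra R A]
    {J : Type*} [Fintype J] (ζ ζ' : J → Derivation R A A) : A → A :=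
  fun a => ∑ j : J, ζ j (ζ' j a)

/-- The operator `𝒯 = e^{(ħ/2)𝒟}` acting coefficientwise on `A[[ħ]]`. -/
noncomputable def Tmap {R A : Type*} [CommRing R] [CommRing A] [Algebra R A] [Algebra ℚ A]
    {J : Type*} [Fintype J] (ζ ζ' : J → Derivation R A A) (F : PowerSeries A) :
    PowerSeries A :=
  PowerSeries.mk fun N =>
    ∑ p ∈ Finset.HasAntidiagonal.antidiagonal N,
      ((2 : ℚ) ^ p.2 * (p.2.factorial : ℚ))⁻¹ • (Dop ζ ζ')^[p.2] (PowerSeries.coeff (R := A) p.1 F)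

/-- The operator `e^{-(ħ/2)𝒟}` acting coefficientwise on `A[[ħ]]`. -/
noncomputable def Tinv {R A : Type*} [CommRing R] [CommRing A] [Algebra R A] [Algebra ℚ A]
    {J : Type*} [Fintype J] (ζ ζ' : J → Derivation R A A) (F : PowerSeries A) :
    PowerSeries A :=
  PowerSeries.mk fun N =>
    ∑ p ∈ Finset.HasAntidiagonal.antidiagonal N,
      ((-1 : ℚ) ^ p.2 * ((2 : ℚ) ^ p.2 * (p.2.factorial : ℚ))⁻¹) •
        (Dop ζ ζ')^[p.2] (PowerSeries.coeff (R := A) p.1 F)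

/-- Selection of a derivation from the pair `(ζ_j, ζ'_j)` according to a Boolean flag:
`ζsel ζ ζ' (j, false) = ζ_j` and `ζsel ζ ζ' (j, true) = ζ'_j`. -/
noncomputable def ζsel {R A : Type*} [CommRing R] [CommRing A] [Algebra R A]
    {J : Type*} (ζ ζ' : J → Derivation R A A) : J × Bool → Derivation R A A :=
  fun p => if p.2 then ζ' p.1 else ζ p.1

/-- The exponential product determined by the symmetrized bidifferential operator
`D(F⊗G) = (1/2) Σ_j (ζ_j F ⊗ ζ'_j G + ζ'_j F ⊗ ζ_j G)`:
`F ⋆ G = Σ_n (ħ^n/(2^n n!)) Σ_{j⃗} Σ_{ε ∈ {0,1}^n}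
  (ζ^{(ε₁)}_{j₁}∘⋯∘ζ^{(εₙ)}_{jₙ})(F) · (ζ^{(1-ε₁)}_{j₁}∘⋯∘ζ^{(1-εₙ)}_{jₙ})(G)`,
extended coefficientwise to `A[[ħ]]`. -/
noncomputable def symExpProd {R A : Type*} [CommRing R] [CommRing A] [Algebra R A] [Algebra ℚ A]
    {J : Type*} [Fintype J] [DecidableEq J] (ζ ζ' : J → Derivation R A A)
    (F G : PowerSeries A) : PowerSeries A :=
  PowerSeries.mk fun N =>
    ∑ mn ∈ Finset.HasAntidiagonal.antidiagonal N, ∑ ab ∈ Finset.HasAntidiagonal.antidiagonal mn.1,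
      ((2 : ℚ) ^ mn.2 * (mn.2.factorial : ℚ))⁻¹ •
        ∑ w : Fin mn.2 → J × Bool,
          compDer (ζsel ζ ζ') mn.2 w (PowerSeries.coeff (R := A) ab.1 F) *
            compDer (ζsel ζ ζ') mn.2 (fun i => ((w i).1, !(w i).2))
              (PowerSeries.coeff (R := A) ab.2 G)

set_option linter.unusedSectionVars false

namespace TOaux

noncomputable def cQ (n : ℕ) : ℚ := ((2 : ℚ) ^ n * (n.factorial : ℚ))⁻¹
noncomputable def sQ (n : ℕ) : ℚ := (-1 : ℚ) ^ n * cQ n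

lemma fact_ne (n : ℕ) : ((n.factorial : ℚ)) ≠ 0 := by
  exact_mod_cast n.factorial_ne_zero

lemma cQ_ne (n : ℕ) : cQ n ≠ 0 := by
  unfold cQ
  positivity

lemma cQ_zero : cQ 0 = 1 := by simp [cQ]

lemma sQ_zero : sQ 0 = 1 := by simp [sQ, cQ_zero]

lemma two_k1_ne (k : ℕ) : (2 * ((k : ℚ) + 1)) ≠ 0 := by positivity

lemma cQ_succ (k : ℕ) : (2 * ((k : ℚ) + 1)) * cQ (k + 1) = cQ k := by
  unfold cQ
  rw [Nat.factorial_succ, pow_succ]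
  push_cast
  field_simp

lemma sQ_succ (k : ℕ) : (2 * ((k : ℚ) + 1)) * sQ (k + 1) = - sQ k := by
  have h := cQ_succ k
  unfold sQ
  linear_combination ((-1 : ℚ) ^ (k + 1)) * h

lemma cQ_sQ_delta (k : ℕ) :
    ∑ y ∈ Finset.HasAntidiagonal.antidiagonal k, cQ y.2 * sQ y.1 = if k = 0 then 1 else 0 := by
  rw [Finset.Nat.sum_antidiagonal_eq_sum_range_succ_mk]
  have hterm : ∀ i ∈ Finset.range (k + 1),
      cQ (k - i) * sQ i = cQ k * ((-1 : ℚ) ^ i * (k.choose i : ℚ)) := by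
    intro i hi
    have hik : i ≤ k := by simpa using Nat.lt_succ_iff.mp (Finset.mem_range.mp hi)
    simp only [cQ, sQ]
    rw [Nat.cast_choose ℚ hik]
    have h2 : (2 : ℚ) ^ (k - i) * (2 : ℚ) ^ i = 2 ^ k := by
      rw [← pow_add]; congr 1; omega
    field_simp
    linear_combination (-1 : ℚ) * h2
  rw [Finset.sum_congr rfl hterm, ← Finset.mul_sum]
  have := @Int.alternating_sum_range_choose k
  have hcast : ∑ m ∈ Finset.range (k + 1), (-1 : ℚ) ^ m * (k.choose m : ℚ)
      = ((∑ m ∈ Finset.range (k + 1), (-1 : ℤ) ^ m * (k.choose m : ℤ) : ℤ) : ℚ) := by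
    push_cast; rfl
  rw [hcast, this]
  rcases Nat.eq_zero_or_pos k with h | h
  · subst h; simp [cQ_zero]
  · rw [if_neg (by omega), if_neg (by omega)]; simp

lemma sQ_cQ_delta (k : ℕ) :
    ∑ y ∈ Finset.HasAntidiagonal.antidiagonal k, sQ y.2 * cQ y.1 = if k = 0 then 1 else 0 := by
  rw [← cQ_sQ_delta k, ← Finset.Nat.sum_antidiagonal_swap (f := fun p => cQ p.2 * sQ p.1)]
  exact Finset.sum_congr rfl fun p _ => by simp [mul_comm]

section Der
variable {R A J : Type*} [CommRing R] [Algebra ℚ R] [CommRing A] [Algebra R A] [Algebra ℚ A]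
  [IsScalarTower ℚ R A] [Fintype J] [DecidableEq J]
  (ζ ζ' : J → Derivation R A A)

lemma der_qsmul (δ : Derivation R A A) (q : ℚ) (a : A) : δ (q • a) = q • δ a := by
  rw [← algebraMap_smul R q a, δ.map_smul, algebraMap_smul R q (δ a)]

lemma Dop_add (a b : A) : Dop ζ ζ' (a + b) = Dop ζ ζ' a + Dop ζ ζ' b := by
  simp [Dop, Finset.sum_add_distrib]

lemma Dop_zero : Dop ζ ζ' 0 = 0 := by simp [Dop]

lemma Dop_qsmul (q : ℚ) (a : A) : Dop ζ ζ' (q • a) = q • Dop ζ ζ' a := by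
  simp [Dop, der_qsmul, Finset.smul_sum]

lemma Dit_add (n : ℕ) (a b : A) :
    (Dop ζ ζ')^[n] (a + b) = (Dop ζ ζ')^[n] a + (Dop ζ ζ')^[n] b := by
  induction n generalizing a b with
  | zero => rfl
  | succ n ih => rw [Function.iterate_succ_apply, Dop_add, Function.iterate_succ_apply,
      Function.iterate_succ_apply, ih]

lemma Dit_qsmul (n : ℕ) (q : ℚ) (a : A) :
    (Dop ζ ζ')^[n] (q • a) = q • (Dop ζ ζ')^[n] a := by
  induction n generalizing a with
  | zero => rfl
  | succ n ih => rw [Function.iterate_succ_apply, Dop_qsmul, Function.iterate_succ_apply, ih]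

lemma Dit_sum {ι : Type*} (n : ℕ) (s : Finset ι) (f : ι → A) :
    (Dop ζ ζ')^[n] (∑ i ∈ s, f i) = ∑ i ∈ s, (Dop ζ ζ')^[n] (f i) := by
  classical
  induction s using Finset.induction_on with
  | empty =>
    simp only [Finset.sum_empty]
    induction n with
    | zero => rfl
    | succ n ih => rw [Function.iterate_succ_apply, Dop_zero, ih]
  | insert _ _ h ih =>
    rw [Finset.sum_insert h, Finset.sum_insert h, Dit_add, ih]

lemma Dop_mul (a b : A) :
    Dop ζ ζ' (a * b) = Dop ζ ζ' a * b + a * Dop ζ ζ' b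
      + ∑ j : J, (ζ j a * ζ' j b + ζ' j a * ζ j b) := by
  have key : ∀ j : J, ζ j (ζ' j (a * b))
      = ζ j (ζ' j a) * b + a * ζ j (ζ' j b) + (ζ j a * ζ' j b + ζ' j a * ζ j b) := by
    intro j
    simp only [Derivation.leibniz, smul_eq_mul, map_add]
    ring
  show (∑ j : J, ζ j (ζ' j (a * b))) = _
  rw [Finset.sum_congr rfl fun j _ => key j]
  rw [Finset.sum_add_distrib, Finset.sum_add_distrib]
  congr 1
  show _ = (∑ j : J, ζ j (ζ' j a)) * b + a * ∑ j : J, ζ j (ζ' j b)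
  rw [Finset.sum_mul, Finset.mul_sum]

section Comm
variable (hζζ : ∀ i j : J, ∀ a : A, ζ i (ζ j a) = ζ j (ζ i a))
    (hζζ' : ∀ i j : J, ∀ a : A, ζ i (ζ' j a) = ζ' j (ζ i a))
    (hζ'ζ' : ∀ i j : J, ∀ a : A, ζ' i (ζ' j a) = ζ' j (ζ' i a))

include hζζ hζζ' in
lemma zeta_Dop (j : J) (a : A) : ζ j (Dop ζ ζ' a) = Dop ζ ζ' (ζ j a) := by
  simp only [Dop, map_sum]
  exact Finset.sum_congr rfl fun i _ => by rw [hζζ j i, hζζ' j i]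

include hζζ' hζ'ζ' in
lemma zeta'_Dop (j : J) (a : A) : ζ' j (Dop ζ ζ' a) = Dop ζ ζ' (ζ' j a) := by
  simp only [Dop, map_sum]
  exact Finset.sum_congr rfl fun i _ => by rw [← hζζ' i j, hζ'ζ' j i]

include hζζ hζζ' in
lemma zeta_Dit (j : J) (n : ℕ) (a : A) :
    ζ j ((Dop ζ ζ')^[n] a) = (Dop ζ ζ')^[n] (ζ j a) := by
  induction n generalizing a with
  | zero => rfl
  | succ n ih => rw [Function.iterate_succ_apply, Function.iterate_succ_apply, ih,
      zeta_Dop ζ ζ' hζζ hζζ']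

include hζζ' hζ'ζ' in
lemma zeta'_Dit (j : J) (n : ℕ) (a : A) :
    ζ' j ((Dop ζ ζ')^[n] a) = (Dop ζ ζ')^[n] (ζ' j a) := by
  induction n generalizing a with
  | zero => rfl
  | succ n ih => rw [Function.iterate_succ_apply, Function.iterate_succ_apply, ih,
      zeta'_Dop ζ ζ' hζζ' hζ'ζ']

end Comm

lemma compDer_der {I : Type*} (ξ : I → Derivation R A A) (δ : Derivation R A A)
    (h : ∀ x (a : A), ξ x (δ a) = δ (ξ x a)) :
    ∀ (k : ℕ) (w : Fin k → I) (a : A), compDer ξ k w (δ a) = δ (compDer ξ k w a)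
  | 0, _, a => rfl
  | k + 1, w, a => by
    show ξ (w 0) (compDer ξ k _ (δ a)) = δ (ξ (w 0) (compDer ξ k _ a))
    rw [compDer_der ξ δ h k _ a, h]

lemma compDer_cons {I : Type*} (ξ : I → Derivation R A A) (k : ℕ) (x : I) (w : Fin k → I)
    (a : A) : compDer ξ (k + 1) (Fin.cons x w) a = ξ x (compDer ξ k w a) := by
  simp only [compDer, Fin.cons_zero, Fin.cons_succ]

end Der

section AD
open Finset
variable {M : Type*} [AddCommMonoid M]

lemma t3_mid (k : ℕ) (F : ℕ → ℕ → ℕ → M) (h : ∀ n q, F n 0 q = 0) :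
    ∑ x ∈ antidiagonal (k + 1), ∑ y ∈ antidiagonal x.2, F x.1 y.1 y.2
      = ∑ x ∈ antidiagonal k, ∑ y ∈ antidiagonal x.2, F x.1 (y.1 + 1) y.2 := by
  rw [Finset.Nat.sum_antidiagonal_succ'
    (f := fun x => ∑ y ∈ antidiagonal x.2, F x.1 y.1 y.2)]
  simp only [Finset.Nat.antidiagonal_zero, Finset.sum_singleton, h, zero_add]
  exact Finset.sum_congr rfl fun x _ => by
    rw [Finset.Nat.sum_antidiagonal_succ (f := fun y => F x.1 y.1 y.2)]
    simp [h]

lemma t3_last (k : ℕ) (F : ℕ → ℕ → ℕ → M) (h : ∀ n p, F n p 0 = 0) :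
    ∑ x ∈ antidiagonal (k + 1), ∑ y ∈ antidiagonal x.2, F x.1 y.1 y.2
      = ∑ x ∈ antidiagonal k, ∑ y ∈ antidiagonal x.2, F x.1 y.1 (y.2 + 1) := by
  rw [Finset.Nat.sum_antidiagonal_succ'
    (f := fun x => ∑ y ∈ antidiagonal x.2, F x.1 y.1 y.2)]
  simp only [Finset.Nat.antidiagonal_zero, Finset.sum_singleton, h, zero_add]
  exact Finset.sum_congr rfl fun x _ => by
    rw [Finset.Nat.sum_antidiagonal_succ' (f := fun y => F x.1 y.1 y.2)]
    simp [h]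

lemma AD_assoc (m : ℕ) (g : ℕ → ℕ → ℕ → M) :
    ∑ x ∈ antidiagonal m, ∑ y ∈ antidiagonal x.1, g y.1 y.2 x.2
      = ∑ x ∈ antidiagonal m, ∑ y ∈ antidiagonal x.2, g x.1 y.1 y.2 := by
  rw [Finset.sum_sigma' (antidiagonal m) (fun x => antidiagonal x.1)
    (fun x y => g y.1 y.2 x.2)]
  rw [Finset.sum_sigma' (antidiagonal m) (fun x => antidiagonal x.2)
    (fun x y => g x.1 y.1 y.2)]
  refine Finset.sum_nbij' (fun p => ⟨(p.2.1, p.2.2 + p.1.2), (p.2.2, p.1.2)⟩)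
    (fun p => ⟨(p.1.1 + p.2.1, p.2.2), (p.1.1, p.2.1)⟩) ?_ ?_ ?_ ?_ ?_
  · rintro ⟨⟨u, c⟩, ⟨a, b⟩⟩ hp
    simp only [Finset.mem_sigma, Finset.HasAntidiagonal.mem_antidiagonal, and_true, true_and] at hp ⊢
    omega
  · rintro ⟨⟨u, c⟩, ⟨a, b⟩⟩ hp
    simp only [Finset.mem_sigma, Finset.HasAntidiagonal.mem_antidiagonal, and_true, true_and] at hp ⊢
    omega
  · rintro ⟨⟨u, c⟩, ⟨a, b⟩⟩ hp
    simp only [Finset.mem_sigma, Finset.HasAntidiagonal.mem_antidiagonal] at hp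
    obtain ⟨h1, h2⟩ := hp
    subst h2
    rfl
  · rintro ⟨⟨u, c⟩, ⟨a, b⟩⟩ hp
    simp only [Finset.mem_sigma, Finset.HasAntidiagonal.mem_antidiagonal] at hp
    obtain ⟨h1, h2⟩ := hp
    subst h2
    rfl
  · rintro ⟨⟨u, c⟩, ⟨a, b⟩⟩ hp
    rfl

lemma quad_reindex (N : ℕ) (T : ℕ → ℕ → ℕ → ℕ → ℕ → M) :
    (∑ mn ∈ antidiagonal N, ∑ uv ∈ antidiagonal mn.1, ∑ ap ∈ antidiagonal uv.1,
        ∑ bq ∈ antidiagonal uv.2, T ap.1 bq.1 mn.2 ap.2 bq.2)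
      = ∑ mk ∈ antidiagonal N, ∑ ab ∈ antidiagonal mk.1, ∑ nr ∈ antidiagonal mk.2,
          ∑ pq ∈ antidiagonal nr.2, T ab.1 ab.2 nr.1 pq.1 pq.2 := by
  simp only [Finset.sum_sigma']
  refine Finset.sum_nbij'
    (fun p => match p with
      | ⟨(m, n), (u, v), (a, pp), (b, qq)⟩ =>
        ⟨(a + b, n + (pp + qq)), (a, b), (n, pp + qq), (pp, qq)⟩)
    (fun q => match q with
      | ⟨(m, k), (a, b), (n, r), (pp, qq)⟩ =>
        ⟨(a + pp + (b + qq), n), (a + pp, b + qq), (a, pp), (b, qq)⟩)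
    ?_ ?_ ?_ ?_ ?_
  · rintro ⟨⟨m, n⟩, ⟨u, v⟩, ⟨a, pp⟩, ⟨b, qq⟩⟩ hp
    simp only [Finset.mem_sigma, Finset.HasAntidiagonal.mem_antidiagonal, and_true, true_and] at hp ⊢
    omega
  · rintro ⟨⟨m, k⟩, ⟨a, b⟩, ⟨n, r⟩, ⟨pp, qq⟩⟩ hq
    simp only [Finset.mem_sigma, Finset.HasAntidiagonal.mem_antidiagonal, and_true, true_and] at hq ⊢
    omega
  · rintro ⟨⟨m, n⟩, ⟨u, v⟩, ⟨a, pp⟩, ⟨b, qq⟩⟩ hp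
    simp only [Finset.mem_sigma, Finset.HasAntidiagonal.mem_antidiagonal] at hp
    obtain ⟨h1, h2, h3, h4⟩ := hp
    subst h3; subst h4; subst h2; subst h1
    rfl
  · rintro ⟨⟨m, k⟩, ⟨a, b⟩, ⟨n, r⟩, ⟨pp, qq⟩⟩ hq
    simp only [Finset.mem_sigma, Finset.HasAntidiagonal.mem_antidiagonal] at hq
    obtain ⟨h1, h2, h3, h4⟩ := hq
    subst h4; subst h3; subst h2; subst h1
    rfl
  · rintro ⟨⟨m, n⟩, ⟨u, v⟩, ⟨a, pp⟩, ⟨b, qq⟩⟩ hp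
    rfl

end AD

section Core
variable {R A J : Type*} [CommRing R] [Algebra ℚ R] [CommRing A] [Algebra R A] [Algebra ℚ A]
  [IsScalarTower ℚ R A] [Fintype J] [DecidableEq J]
  (ζ ζ' : J → Derivation R A A)

noncomputable def Lsum (k : ℕ) (f g : A) : A :=
  ∑ x ∈ Finset.HasAntidiagonal.antidiagonal k, ∑ y ∈ Finset.HasAntidiagonal.antidiagonal x.2,
    (cQ x.1 * (sQ y.1 * sQ y.2)) •
      (Dop ζ ζ')^[x.1] ((Dop ζ ζ')^[y.1] f * (Dop ζ ζ')^[y.2] g)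

noncomputable def Rsum (k : ℕ) (f g : A) : A :=
  cQ k • ∑ w : Fin k → J × Bool,
    compDer (ζsel ζ ζ') k w f * compDer (ζsel ζ ζ') k (fun i => ((w i).1, !(w i).2)) g

variable (hζζ : ∀ i j : J, ∀ a : A, ζ i (ζ j a) = ζ j (ζ i a))
    (hζζ' : ∀ i j : J, ∀ a : A, ζ i (ζ' j a) = ζ' j (ζ i a))
    (hζ'ζ' : ∀ i j : J, ∀ a : A, ζ' i (ζ' j a) = ζ' j (ζ' i a))

include hζζ hζζ' in
lemma sel_comm_zeta (j : J) (x : J × Bool) (a : A) :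
    ζsel ζ ζ' x (ζ j a) = ζ j (ζsel ζ ζ' x a) := by
  rcases x with ⟨i, b⟩
  cases b
  · simpa [ζsel] using hζζ i j a
  · simpa [ζsel] using (hζζ' j i a).symm

include hζζ' hζ'ζ' in
lemma sel_comm_zeta' (j : J) (x : J × Bool) (a : A) :
    ζsel ζ ζ' x (ζ' j a) = ζ' j (ζsel ζ ζ' x a) := by
  rcases x with ⟨i, b⟩
  cases b
  · simpa [ζsel] using hζζ' i j a
  · simpa [ζsel] using hζ'ζ' i j a

lemma flip_cons (k : ℕ) (x : J × Bool) (w : Fin k → J × Bool) :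
    (fun i : Fin (k + 1) => (((Fin.cons x w : Fin (k+1) → J × Bool) i).1,
        !((Fin.cons x w : Fin (k+1) → J × Bool) i).2))
      = Fin.cons (x.1, !x.2) (fun i => ((w i).1, !(w i).2)) := by
  funext i
  induction i using Fin.cases <;> simp

include hζζ hζζ' hζ'ζ' in
lemma Rrec (k : ℕ) (f g : A) :
    Rsum ζ ζ' (k + 1) f g = (2 * ((k : ℚ) + 1))⁻¹ •
      ∑ j : J, (Rsum ζ ζ' k (ζ j f) (ζ' j g) + Rsum ζ ζ' k (ζ' j f) (ζ j g)) := by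
  set ξ := ζsel ζ ζ' with hξ
  have hsum : (∑ w : Fin (k+1) → J × Bool,
      compDer ξ (k+1) w f * compDer ξ (k+1) (fun i => ((w i).1, !(w i).2)) g)
      = ∑ x : J × Bool, ∑ w : Fin k → J × Bool,
          (compDer ξ (k+1) (Fin.cons x w) f *
            compDer ξ (k+1) (fun i => (((Fin.cons x w : Fin (k+1) → J × Bool) i).1,
              !((Fin.cons x w : Fin (k+1) → J × Bool) i).2)) g) := by
    rw [← Equiv.sum_comp (Fin.consEquiv fun _ : Fin (k+1) => J × Bool)
      (fun w => compDer ξ (k+1) w f *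
        compDer ξ (k+1) (fun i => ((w i).1, !(w i).2)) g), Fintype.sum_prod_type]
    rfl
  have hterm : ∀ (x : J × Bool) (w : Fin k → J × Bool),
      compDer ξ (k+1) (Fin.cons x w) f *
        compDer ξ (k+1) (fun i => (((Fin.cons x w : Fin (k+1) → J × Bool) i).1,
          !((Fin.cons x w : Fin (k+1) → J × Bool) i).2)) g
      = ξ x (compDer ξ k w f) *
          ξ (x.1, !x.2) (compDer ξ k (fun i => ((w i).1, !(w i).2)) g) := by
    intro x w
    rw [flip_cons, compDer_cons, compDer_cons]
  have hJ : (∑ w : Fin (k+1) → J × Bool,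
      compDer ξ (k+1) w f * compDer ξ (k+1) (fun i => ((w i).1, !(w i).2)) g)
      = ∑ j : J, ((∑ w : Fin k → J × Bool, compDer ξ k w (ζ' j f) *
            compDer ξ k (fun i => ((w i).1, !(w i).2)) (ζ j g))
          + ∑ w : Fin k → J × Bool, compDer ξ k w (ζ j f) *
            compDer ξ k (fun i => ((w i).1, !(w i).2)) (ζ' j g)) := by
    rw [hsum]
    rw [Fintype.sum_prod_type]
    refine Finset.sum_congr rfl fun j _ => ?_
    rw [Fintype.sum_bool]
    congr 1
    · refine Finset.sum_congr rfl fun w _ => ?_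
      rw [hterm]
      have h1 : ξ (j, true) (compDer ξ k w f)
          = compDer ξ k w (ζ' j f) := by
        rw [show ξ (j, true) = ζ' j from rfl,
          compDer_der ξ (ζ' j) (fun x a => sel_comm_zeta' ζ ζ' hζζ' hζ'ζ' j x a) k w f]
      have h2 : ξ ((j, true).1, !(j, true).2) (compDer ξ k (fun i => ((w i).1, !(w i).2)) g)
          = compDer ξ k (fun i => ((w i).1, !(w i).2)) (ζ j g) := by
        rw [show ξ ((j, true).1, !(j, true).2) = ζ j from rfl,
          compDer_der ξ (ζ j) (fun x a => sel_comm_zeta ζ ζ' hζζ hζζ' j x a) k _ g]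
      rw [h1, h2]
    · refine Finset.sum_congr rfl fun w _ => ?_
      rw [hterm]
      have h1 : ξ (j, false) (compDer ξ k w f)
          = compDer ξ k w (ζ j f) := by
        rw [show ξ (j, false) = ζ j from rfl,
          compDer_der ξ (ζ j) (fun x a => sel_comm_zeta ζ ζ' hζζ hζζ' j x a) k w f]
      have h2 : ξ ((j, false).1, !(j, false).2) (compDer ξ k (fun i => ((w i).1, !(w i).2)) g)
          = compDer ξ k (fun i => ((w i).1, !(w i).2)) (ζ' j g) := by
        rw [show ξ ((j, false).1, !(j, false).2) = ζ' j from rfl,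
          compDer_der ξ (ζ' j) (fun x a => sel_comm_zeta' ζ ζ' hζζ' hζ'ζ' j x a) k _ g]
      rw [h1, h2]
  show cQ (k+1) • _ = _
  rw [hJ]
  have hc : cQ (k + 1) = (2 * ((k : ℚ) + 1))⁻¹ * cQ k := by
    have h := cQ_succ k
    field_simp
    linarith [h]
  rw [hc, ← smul_smul]
  congr 1
  rw [Finset.smul_sum]
  refine Finset.sum_congr rfl fun j _ => ?_
  unfold Rsum
  rw [smul_add]
  rw [add_comm]

include hζζ hζζ' hζ'ζ' in
lemma Dop_mul_step (n p q : ℕ) (f g : A) :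
    (Dop ζ ζ')^[n + 1] ((Dop ζ ζ')^[p] f * (Dop ζ ζ')^[q] g)
      = (Dop ζ ζ')^[n] ((Dop ζ ζ')^[p + 1] f * (Dop ζ ζ')^[q] g)
        + (Dop ζ ζ')^[n] ((Dop ζ ζ')^[p] f * (Dop ζ ζ')^[q + 1] g)
        + ∑ j : J, ((Dop ζ ζ')^[n] ((Dop ζ ζ')^[p] (ζ j f) * (Dop ζ ζ')^[q] (ζ' j g))
            + (Dop ζ ζ')^[n] ((Dop ζ ζ')^[p] (ζ' j f) * (Dop ζ ζ')^[q] (ζ j g))) := by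
  rw [Function.iterate_succ_apply, Dop_mul ζ ζ', Dit_add, Dit_add]
  rw [← Function.iterate_succ_apply' (Dop ζ ζ') p f,
      ← Function.iterate_succ_apply' (Dop ζ ζ') q g]
  congr 1
  rw [Dit_sum]
  refine Finset.sum_congr rfl fun j _ => ?_
  simp only [Dit_add, zeta_Dit ζ ζ' hζζ hζζ', zeta'_Dit ζ ζ' hζζ' hζ'ζ']

include hζζ hζζ' hζ'ζ' in
lemma Lrec (k : ℕ) (f g : A) :
    Lsum ζ ζ' (k + 1) f g = (2 * ((k : ℚ) + 1))⁻¹ •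
      ∑ j : J, (Lsum ζ ζ' k (ζ j f) (ζ' j g) + Lsum ζ ζ' k (ζ' j f) (ζ j g)) := by
  have hne : (2 * ((k : ℚ) + 1)) ≠ 0 := two_k1_ne k
  have key : (2 * ((k : ℚ) + 1)) • Lsum ζ ζ' (k + 1) f g
      = ∑ j : J, (Lsum ζ ζ' k (ζ j f) (ζ' j g) + Lsum ζ ζ' k (ζ' j f) (ζ j g)) := by
    have e1 : (2 * ((k : ℚ) + 1)) • Lsum ζ ζ' (k + 1) f g
        = ∑ x ∈ Finset.HasAntidiagonal.antidiagonal (k + 1), ∑ y ∈ Finset.HasAntidiagonal.antidiagonal x.2,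
            ((2 * (x.1 : ℚ) * (cQ x.1 * (sQ y.1 * sQ y.2))) •
                (Dop ζ ζ')^[x.1] ((Dop ζ ζ')^[y.1] f * (Dop ζ ζ')^[y.2] g)
              + ((2 * (y.1 : ℚ) * (cQ x.1 * (sQ y.1 * sQ y.2))) •
                  (Dop ζ ζ')^[x.1] ((Dop ζ ζ')^[y.1] f * (Dop ζ ζ')^[y.2] g)
                + (2 * (y.2 : ℚ) * (cQ x.1 * (sQ y.1 * sQ y.2))) •
                  (Dop ζ ζ')^[x.1] ((Dop ζ ζ')^[y.1] f * (Dop ζ ζ')^[y.2] g))) := by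
      unfold Lsum
      rw [Finset.smul_sum]
      refine Finset.sum_congr rfl fun x hx => ?_
      rw [Finset.smul_sum]
      refine Finset.sum_congr rfl fun y hy => ?_
      have hx' : x.1 + x.2 = k + 1 := Finset.HasAntidiagonal.mem_antidiagonal.mp hx
      have hy' : y.1 + y.2 = x.2 := Finset.HasAntidiagonal.mem_antidiagonal.mp hy
      have hk : (x.1 : ℚ) + ((y.1 : ℚ) + (y.2 : ℚ)) = (k : ℚ) + 1 := by
        have h : x.1 + (y.1 + y.2) = k + 1 := by omega
        exact_mod_cast h
      rw [smul_smul, show (2 * ((k : ℚ) + 1)) * (cQ x.1 * (sQ y.1 * sQ y.2))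
          = 2 * (x.1 : ℚ) * (cQ x.1 * (sQ y.1 * sQ y.2))
            + (2 * (y.1 : ℚ) * (cQ x.1 * (sQ y.1 * sQ y.2))
              + 2 * (y.2 : ℚ) * (cQ x.1 * (sQ y.1 * sQ y.2))) from by
        linear_combination (-(2 * (cQ x.1 * (sQ y.1 * sQ y.2)))) * hk, add_smul, add_smul]
    rw [e1]
    simp only [Finset.sum_add_distrib]
    have hSb : (∑ x ∈ Finset.HasAntidiagonal.antidiagonal (k + 1), ∑ y ∈ Finset.HasAntidiagonal.antidiagonal x.2,
          (2 * (y.1 : ℚ) * (cQ x.1 * (sQ y.1 * sQ y.2))) •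
            (Dop ζ ζ')^[x.1] ((Dop ζ ζ')^[y.1] f * (Dop ζ ζ')^[y.2] g))
        = - ∑ x ∈ Finset.HasAntidiagonal.antidiagonal k, ∑ y ∈ Finset.HasAntidiagonal.antidiagonal x.2,
            (cQ x.1 * (sQ y.1 * sQ y.2)) •
              (Dop ζ ζ')^[x.1] ((Dop ζ ζ')^[y.1 + 1] f * (Dop ζ ζ')^[y.2] g) := by
      rw [t3_mid k (fun n p q => (2 * (p : ℚ) * (cQ n * (sQ p * sQ q))) •
          (Dop ζ ζ')^[n] ((Dop ζ ζ')^[p] f * (Dop ζ ζ')^[q] g))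
        (by intro n q; simp)]
      rw [← Finset.sum_neg_distrib]
      refine Finset.sum_congr rfl fun x _ => ?_
      rw [← Finset.sum_neg_distrib]
      refine Finset.sum_congr rfl fun y _ => ?_
      rw [show 2 * ((y.1 + 1 : ℕ) : ℚ) * (cQ x.1 * (sQ (y.1 + 1) * sQ y.2))
          = -(cQ x.1 * (sQ y.1 * sQ y.2)) from by
        have h := sQ_succ y.1
        push_cast
        linear_combination (cQ x.1 * sQ y.2) * h, neg_smul]
    have hSc : (∑ x ∈ Finset.HasAntidiagonal.antidiagonal (k + 1), ∑ y ∈ Finset.HasAntidiagonal.antidiagonal x.2,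
          (2 * (y.2 : ℚ) * (cQ x.1 * (sQ y.1 * sQ y.2))) •
            (Dop ζ ζ')^[x.1] ((Dop ζ ζ')^[y.1] f * (Dop ζ ζ')^[y.2] g))
        = - ∑ x ∈ Finset.HasAntidiagonal.antidiagonal k, ∑ y ∈ Finset.HasAntidiagonal.antidiagonal x.2,
            (cQ x.1 * (sQ y.1 * sQ y.2)) •
              (Dop ζ ζ')^[x.1] ((Dop ζ ζ')^[y.1] f * (Dop ζ ζ')^[y.2 + 1] g) := by
      rw [t3_last k (fun n p q => (2 * (q : ℚ) * (cQ n * (sQ p * sQ q))) •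
          (Dop ζ ζ')^[n] ((Dop ζ ζ')^[p] f * (Dop ζ ζ')^[q] g))
        (by intro n p; simp)]
      rw [← Finset.sum_neg_distrib]
      refine Finset.sum_congr rfl fun x _ => ?_
      rw [← Finset.sum_neg_distrib]
      refine Finset.sum_congr rfl fun y _ => ?_
      rw [show 2 * ((y.2 + 1 : ℕ) : ℚ) * (cQ x.1 * (sQ y.1 * sQ (y.2 + 1)))
          = -(cQ x.1 * (sQ y.1 * sQ y.2)) from by
        have h := sQ_succ y.2
        push_cast
        linear_combination (cQ x.1 * sQ y.1) * h, neg_smul]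
    have hSa : (∑ x ∈ Finset.HasAntidiagonal.antidiagonal (k + 1), ∑ y ∈ Finset.HasAntidiagonal.antidiagonal x.2,
          (2 * (x.1 : ℚ) * (cQ x.1 * (sQ y.1 * sQ y.2))) •
            (Dop ζ ζ')^[x.1] ((Dop ζ ζ')^[y.1] f * (Dop ζ ζ')^[y.2] g))
        = (∑ x ∈ Finset.HasAntidiagonal.antidiagonal k, ∑ y ∈ Finset.HasAntidiagonal.antidiagonal x.2,
            (cQ x.1 * (sQ y.1 * sQ y.2)) •
              (Dop ζ ζ')^[x.1] ((Dop ζ ζ')^[y.1 + 1] f * (Dop ζ ζ')^[y.2] g))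
          + (∑ x ∈ Finset.HasAntidiagonal.antidiagonal k, ∑ y ∈ Finset.HasAntidiagonal.antidiagonal x.2,
            (cQ x.1 * (sQ y.1 * sQ y.2)) •
              (Dop ζ ζ')^[x.1] ((Dop ζ ζ')^[y.1] f * (Dop ζ ζ')^[y.2 + 1] g))
          + ∑ x ∈ Finset.HasAntidiagonal.antidiagonal k, ∑ y ∈ Finset.HasAntidiagonal.antidiagonal x.2, ∑ j : J,
              ((cQ x.1 * (sQ y.1 * sQ y.2)) •
                  (Dop ζ ζ')^[x.1] ((Dop ζ ζ')^[y.1] (ζ j f) * (Dop ζ ζ')^[y.2] (ζ' j g))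
                + (cQ x.1 * (sQ y.1 * sQ y.2)) •
                  (Dop ζ ζ')^[x.1] ((Dop ζ ζ')^[y.1] (ζ' j f) * (Dop ζ ζ')^[y.2] (ζ j g))) := by
      rw [Finset.Nat.sum_antidiagonal_succ
        (f := fun x => ∑ y ∈ Finset.HasAntidiagonal.antidiagonal x.2,
          (2 * (x.1 : ℚ) * (cQ x.1 * (sQ y.1 * sQ y.2))) •
            (Dop ζ ζ')^[x.1] ((Dop ζ ζ')^[y.1] f * (Dop ζ ζ')^[y.2] g))]
      simp only [Nat.cast_zero, mul_zero, zero_mul, zero_smul, Finset.sum_const_zero, zero_add]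
      have e2 : ∀ x : ℕ × ℕ, ∀ y : ℕ × ℕ,
          (2 * (((x.1 + 1 : ℕ)) : ℚ) * (cQ (x.1 + 1) * (sQ y.1 * sQ y.2))) •
              (Dop ζ ζ')^[x.1 + 1] ((Dop ζ ζ')^[y.1] f * (Dop ζ ζ')^[y.2] g)
            = (cQ x.1 * (sQ y.1 * sQ y.2)) •
                (Dop ζ ζ')^[x.1] ((Dop ζ ζ')^[y.1 + 1] f * (Dop ζ ζ')^[y.2] g)
              + (cQ x.1 * (sQ y.1 * sQ y.2)) •
                (Dop ζ ζ')^[x.1] ((Dop ζ ζ')^[y.1] f * (Dop ζ ζ')^[y.2 + 1] g)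
              + ∑ j : J, ((cQ x.1 * (sQ y.1 * sQ y.2)) •
                    (Dop ζ ζ')^[x.1] ((Dop ζ ζ')^[y.1] (ζ j f) * (Dop ζ ζ')^[y.2] (ζ' j g))
                  + (cQ x.1 * (sQ y.1 * sQ y.2)) •
                    (Dop ζ ζ')^[x.1] ((Dop ζ ζ')^[y.1] (ζ' j f) * (Dop ζ ζ')^[y.2] (ζ j g))) := by
        intro x y
        rw [show 2 * (((x.1 + 1 : ℕ)) : ℚ) * (cQ (x.1 + 1) * (sQ y.1 * sQ y.2))
            = cQ x.1 * (sQ y.1 * sQ y.2) from by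
          have h := cQ_succ x.1
          push_cast
          linear_combination (sQ y.1 * sQ y.2) * h]
        rw [Dop_mul_step ζ ζ' hζζ hζζ' hζ'ζ' x.1 y.1 y.2 f g]
        rw [smul_add, smul_add, Finset.smul_sum]
        simp only [smul_add]
      calc (∑ x ∈ Finset.HasAntidiagonal.antidiagonal k, ∑ y ∈ Finset.HasAntidiagonal.antidiagonal x.2,
            (2 * (((x.1 + 1 : ℕ)) : ℚ) * (cQ (x.1 + 1) * (sQ y.1 * sQ y.2))) •
              (Dop ζ ζ')^[x.1 + 1] ((Dop ζ ζ')^[y.1] f * (Dop ζ ζ')^[y.2] g))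
          = ∑ x ∈ Finset.HasAntidiagonal.antidiagonal k, ∑ y ∈ Finset.HasAntidiagonal.antidiagonal x.2,
              ((cQ x.1 * (sQ y.1 * sQ y.2)) •
                  (Dop ζ ζ')^[x.1] ((Dop ζ ζ')^[y.1 + 1] f * (Dop ζ ζ')^[y.2] g)
                + (cQ x.1 * (sQ y.1 * sQ y.2)) •
                  (Dop ζ ζ')^[x.1] ((Dop ζ ζ')^[y.1] f * (Dop ζ ζ')^[y.2 + 1] g)
                + ∑ j : J, ((cQ x.1 * (sQ y.1 * sQ y.2)) •
                      (Dop ζ ζ')^[x.1] ((Dop ζ ζ')^[y.1] (ζ j f) * (Dop ζ ζ')^[y.2] (ζ' j g))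
                    + (cQ x.1 * (sQ y.1 * sQ y.2)) •
                      (Dop ζ ζ')^[x.1] ((Dop ζ ζ')^[y.1] (ζ' j f) * (Dop ζ ζ')^[y.2] (ζ j g)))) :=
            Finset.sum_congr rfl fun x _ => Finset.sum_congr rfl fun y _ => e2 x y
        _ = _ := by simp only [Finset.sum_add_distrib]
    rw [hSa, hSb, hSc]
    have hT3 : (∑ x ∈ Finset.HasAntidiagonal.antidiagonal k, ∑ y ∈ Finset.HasAntidiagonal.antidiagonal x.2, ∑ j : J,
          ((cQ x.1 * (sQ y.1 * sQ y.2)) •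
              (Dop ζ ζ')^[x.1] ((Dop ζ ζ')^[y.1] (ζ j f) * (Dop ζ ζ')^[y.2] (ζ' j g))
            + (cQ x.1 * (sQ y.1 * sQ y.2)) •
              (Dop ζ ζ')^[x.1] ((Dop ζ ζ')^[y.1] (ζ' j f) * (Dop ζ ζ')^[y.2] (ζ j g))))
        = ∑ j : J, (Lsum ζ ζ' k (ζ j f) (ζ' j g) + Lsum ζ ζ' k (ζ' j f) (ζ j g)) := by
      have swap1 : ∀ x : ℕ × ℕ, (∑ y ∈ Finset.HasAntidiagonal.antidiagonal x.2, ∑ j : J,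
            ((cQ x.1 * (sQ y.1 * sQ y.2)) •
                (Dop ζ ζ')^[x.1] ((Dop ζ ζ')^[y.1] (ζ j f) * (Dop ζ ζ')^[y.2] (ζ' j g))
              + (cQ x.1 * (sQ y.1 * sQ y.2)) •
                (Dop ζ ζ')^[x.1] ((Dop ζ ζ')^[y.1] (ζ' j f) * (Dop ζ ζ')^[y.2] (ζ j g))))
          = ∑ j : J, ∑ y ∈ Finset.HasAntidiagonal.antidiagonal x.2,
            ((cQ x.1 * (sQ y.1 * sQ y.2)) •
                (Dop ζ ζ')^[x.1] ((Dop ζ ζ')^[y.1] (ζ j f) * (Dop ζ ζ')^[y.2] (ζ' j g))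
              + (cQ x.1 * (sQ y.1 * sQ y.2)) •
                (Dop ζ ζ')^[x.1] ((Dop ζ ζ')^[y.1] (ζ' j f) * (Dop ζ ζ')^[y.2] (ζ j g))) :=
        fun x => Finset.sum_comm
      rw [Finset.sum_congr rfl fun x _ => swap1 x, Finset.sum_comm]
      refine Finset.sum_congr rfl fun j _ => ?_
      unfold Lsum
      simp only [Finset.sum_add_distrib]
    rw [hT3, Finset.sum_add_distrib]
    abel
  rw [← key, smul_smul, inv_mul_cancel₀ hne, one_smul]

include hζζ hζζ' hζ'ζ' in
lemma L_eq_R : ∀ (k : ℕ) (f g : A), Lsum ζ ζ' k f g = Rsum ζ ζ' k f g := by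
  intro k
  induction k with
  | zero =>
    intro f g
    unfold Lsum Rsum
    simp [Finset.Nat.antidiagonal_zero, cQ_zero, sQ_zero, compDer]
  | succ k ih =>
    intro f g
    rw [Lrec ζ ζ' hζζ hζζ' hζ'ζ', Rrec ζ ζ' hζζ hζζ' hζ'ζ']
    congr 1
    refine Finset.sum_congr rfl fun j _ => ?_
    rw [ih, ih]

end Core

section Main
variable {R A J : Type*} [CommRing R] [Algebra ℚ R] [CommRing A] [Algebra R A] [Algebra ℚ A]
  [IsScalarTower ℚ R A] [Fintype J] [DecidableEq J]
  (ζ ζ' : J → Derivation R A A)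

lemma hc_rfl : ∀ n : ℕ, ((2 : ℚ) ^ n * (n.factorial : ℚ))⁻¹ = cQ n := fun _ => rfl
lemma hs_rfl : ∀ n : ℕ, ((-1 : ℚ) ^ n * ((2 : ℚ) ^ n * (n.factorial : ℚ))⁻¹) = sQ n :=
  fun _ => rfl
lemma hs2_rfl : ∀ n : ℕ, ((-1 : ℚ) ^ n * cQ n) = sQ n := fun _ => rfl

lemma inner_collapse (cc ss : ℕ → ℚ)
    (hdelta : ∀ m : ℕ, ∑ y ∈ Finset.HasAntidiagonal.antidiagonal m, cc y.2 * ss y.1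
      = if m = 0 then 1 else 0)
    (F : PowerSeries A) (N : ℕ) :
    (∑ x ∈ Finset.HasAntidiagonal.antidiagonal N, ∑ y ∈ Finset.HasAntidiagonal.antidiagonal x.2,
      (cc y.2 * ss y.1) • (Dop ζ ζ')^[y.2] ((Dop ζ ζ')^[y.1] (PowerSeries.coeff (R := A) x.1 F)))
      = PowerSeries.coeff (R := A) N F := by
  have inner : ∀ x ∈ Finset.HasAntidiagonal.antidiagonal N,
      (∑ y ∈ Finset.HasAntidiagonal.antidiagonal x.2,
        (cc y.2 * ss y.1) • (Dop ζ ζ')^[y.2] ((Dop ζ ζ')^[y.1] (PowerSeries.coeff (R := A) x.1 F)))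
      = (if x.2 = 0 then (1 : ℚ) else 0) • (Dop ζ ζ')^[x.2] (PowerSeries.coeff (R := A) x.1 F) := by
    intro x _
    have e : ∀ y ∈ Finset.HasAntidiagonal.antidiagonal x.2,
        (cc y.2 * ss y.1) • (Dop ζ ζ')^[y.2] ((Dop ζ ζ')^[y.1] (PowerSeries.coeff (R := A) x.1 F))
        = (cc y.2 * ss y.1) • (Dop ζ ζ')^[x.2] (PowerSeries.coeff (R := A) x.1 F) := by
      intro y hy
      have hy' : y.1 + y.2 = x.2 := Finset.HasAntidiagonal.mem_antidiagonal.mp hy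
      rw [← Function.iterate_add_apply, show y.2 + y.1 = x.2 by omega]
    rw [Finset.sum_congr rfl e, ← Finset.sum_smul, hdelta x.2]
  rw [Finset.sum_congr rfl inner]
  rw [Finset.sum_eq_single_of_mem (N, 0) (by simp)]
  · simp
  · intro b hb hne
    have hb' : b.1 + b.2 = N := Finset.HasAntidiagonal.mem_antidiagonal.mp hb
    have : b.2 ≠ 0 := by
      intro h
      exact hne (by rw [Prod.ext_iff]; constructor <;> omega)
    rw [if_neg this, zero_smul]

lemma Tmap_Tinv (F : PowerSeries A) : Tmap ζ ζ' (Tinv ζ ζ' F) = F := by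
  apply PowerSeries.ext
  intro N
  simp only [Tmap, Tinv, PowerSeries.coeff_mk, hc_rfl, hs_rfl, hs2_rfl]
  have e1 : ∀ p ∈ Finset.HasAntidiagonal.antidiagonal N,
      cQ p.2 • (Dop ζ ζ')^[p.2] (∑ q ∈ Finset.HasAntidiagonal.antidiagonal p.1,
        sQ q.2 • (Dop ζ ζ')^[q.2] (PowerSeries.coeff (R := A) q.1 F))
      = ∑ q ∈ Finset.HasAntidiagonal.antidiagonal p.1,
          (cQ p.2 * sQ q.2) • (Dop ζ ζ')^[p.2]
            ((Dop ζ ζ')^[q.2] (PowerSeries.coeff (R := A) q.1 F)) := by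
    intro p _
    rw [Dit_sum, Finset.smul_sum]
    exact Finset.sum_congr rfl fun q _ => by rw [Dit_qsmul, smul_smul]
  rw [Finset.sum_congr rfl e1]
  rw [AD_assoc N (fun a b c => (cQ c * sQ b) • (Dop ζ ζ')^[c]
    ((Dop ζ ζ')^[b] (PowerSeries.coeff (R := A) a F)))]
  exact inner_collapse ζ ζ' cQ sQ cQ_sQ_delta F N

lemma Tinv_Tmap (F : PowerSeries A) : Tinv ζ ζ' (Tmap ζ ζ' F) = F := by
  apply PowerSeries.ext
  intro N
  simp only [Tmap, Tinv, PowerSeries.coeff_mk, hc_rfl, hs_rfl, hs2_rfl]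
  have e1 : ∀ p ∈ Finset.HasAntidiagonal.antidiagonal N,
      sQ p.2 • (Dop ζ ζ')^[p.2] (∑ q ∈ Finset.HasAntidiagonal.antidiagonal p.1,
        cQ q.2 • (Dop ζ ζ')^[q.2] (PowerSeries.coeff (R := A) q.1 F))
      = ∑ q ∈ Finset.HasAntidiagonal.antidiagonal p.1,
          (sQ p.2 * cQ q.2) • (Dop ζ ζ')^[p.2]
            ((Dop ζ ζ')^[q.2] (PowerSeries.coeff (R := A) q.1 F)) := by
    intro p _
    rw [Dit_sum, Finset.smul_sum]
    exact Finset.sum_congr rfl fun q _ => by rw [Dit_qsmul, smul_smul]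
  rw [Finset.sum_congr rfl e1]
  rw [AD_assoc N (fun a b c => (sQ c * cQ b) • (Dop ζ ζ')^[c]
    ((Dop ζ ζ')^[b] (PowerSeries.coeff (R := A) a F)))]
  exact inner_collapse ζ ζ' sQ cQ sQ_cQ_delta F N

lemma prod_eq (hζζ : ∀ i j : J, ∀ a : A, ζ i (ζ j a) = ζ j (ζ i a))
    (hζζ' : ∀ i j : J, ∀ a : A, ζ i (ζ' j a) = ζ' j (ζ i a))
    (hζ'ζ' : ∀ i j : J, ∀ a : A, ζ' i (ζ' j a) = ζ' j (ζ' i a))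
    (F G : PowerSeries A) :
    Tmap ζ ζ' (Tinv ζ ζ' F * Tinv ζ ζ' G) = symExpProd ζ ζ' F G := by
  apply PowerSeries.ext
  intro N
  simp only [Tmap, Tinv, symExpProd, PowerSeries.coeff_mk, PowerSeries.coeff_mul,
    hc_rfl, hs_rfl, hs2_rfl]
  have e1 : ∀ mn ∈ Finset.HasAntidiagonal.antidiagonal N,
      cQ mn.2 • (Dop ζ ζ')^[mn.2] (∑ uv ∈ Finset.HasAntidiagonal.antidiagonal mn.1,
        (∑ ap ∈ Finset.HasAntidiagonal.antidiagonal uv.1,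
            sQ ap.2 • (Dop ζ ζ')^[ap.2] (PowerSeries.coeff (R := A) ap.1 F)) *
          ∑ bq ∈ Finset.HasAntidiagonal.antidiagonal uv.2,
            sQ bq.2 • (Dop ζ ζ')^[bq.2] (PowerSeries.coeff (R := A) bq.1 G))
      = ∑ uv ∈ Finset.HasAntidiagonal.antidiagonal mn.1, ∑ ap ∈ Finset.HasAntidiagonal.antidiagonal uv.1,
          ∑ bq ∈ Finset.HasAntidiagonal.antidiagonal uv.2,
            (cQ mn.2 * (sQ ap.2 * sQ bq.2)) •
              (Dop ζ ζ')^[mn.2] ((Dop ζ ζ')^[ap.2] (PowerSeries.coeff (R := A) ap.1 F) *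
                (Dop ζ ζ')^[bq.2] (PowerSeries.coeff (R := A) bq.1 G)) := by
    intro mn _
    rw [Dit_sum, Finset.smul_sum]
    refine Finset.sum_congr rfl fun uv _ => ?_
    rw [Finset.sum_mul_sum, Dit_sum, Finset.smul_sum]
    refine Finset.sum_congr rfl fun ap _ => ?_
    rw [Dit_sum, Finset.smul_sum]
    refine Finset.sum_congr rfl fun bq _ => ?_
    rw [smul_mul_smul_comm, Dit_qsmul, smul_smul]
  rw [Finset.sum_congr rfl e1]
  rw [quad_reindex N (fun a b n p q => (cQ n * (sQ p * sQ q)) •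
    (Dop ζ ζ')^[n] ((Dop ζ ζ')^[p] (PowerSeries.coeff (R := A) a F) *
      (Dop ζ ζ')^[q] (PowerSeries.coeff (R := A) b G)))]
  refine Finset.sum_congr rfl fun mk _ => Finset.sum_congr rfl fun ab _ => ?_
  exact L_eq_R ζ ζ' hζζ hζζ' hζ'ζ' mk.2 (PowerSeries.coeff (R := A) ab.1 F) (PowerSeries.coeff (R := A) ab.2 G)

end Main

end TOaux

/-- `𝒯 = e^{(ħ/2)𝒟}` is bijective with inverse `e^{-(ħ/2)𝒟}`, and the
time-ordered product `F ·_𝒯 G = 𝒯(𝒯⁻¹F · 𝒯⁻¹G)` is the exponential product determined by the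
symmetrized bidifferential operator `D(F⊗G) = (1/2) Σ_j (ζ_j F ⊗ ζ'_j G + ζ'_j F ⊗ ζ_j G)`. -/
theorem timeOrdered_product_is_exponential
    {R A J : Type*} [CommRing R] [Algebra ℚ R] [CommRing A] [Algebra R A] [Algebra ℚ A]
    [IsScalarTower ℚ R A] [Fintype J] [DecidableEq J]
    (ζ ζ' : J → Derivation R A A)
    (hζζ : ∀ i j : J, ∀ a : A, ζ i (ζ j a) = ζ j (ζ i a))
    (hζζ' : ∀ i j : J, ∀ a : A, ζ i (ζ' j a) = ζ' j (ζ i a))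
    (hζ'ζ' : ∀ i j : J, ∀ a : A, ζ' i (ζ' j a) = ζ' j (ζ' i a)) :
    (∀ F : PowerSeries A, Tmap ζ ζ' (Tinv ζ ζ' F) = F ∧ Tinv ζ ζ' (Tmap ζ ζ' F) = F) ∧
    (∀ F G : PowerSeries A,
      Tmap ζ ζ' (Tinv ζ ζ' F * Tinv ζ ζ' G) = symExpProd ζ ζ' F G) := by
  constructor
  · intro F
    exact ⟨TOaux.Tmap_Tinv ζ ζ' F, TOaux.Tinv_Tmap ζ ζ' F⟩
  · intro F G
    exact TOaux.prod_eq ζ ζ' hζζ hζζ' hζ'ζ' F G
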